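/- Let 0 < ℓ ≤ L, α = 1/L, β = (√(L/ℓ)-1)/(√(L/ℓ)+1), and λ ∈ [ℓ, L]. The eigenvalues z^± = (1/2)((1+β)(1-αλ) ± sqrt((1+β)²(1-αλ)² - 4β(1-αλ))) of T = [[(1+β)(1-αλ), -β(1-αλ)],[1,0]] satisfy |z^±| = √(β(1-αλ)) ≤ √(β(1-αℓ)) = 1 - 1/√(L/ℓ). -/

import Mathlib

open Complex Polynomial

theorem nag_block_eig_modulus
    (L ℓ α β lam : ℝ) (hℓ : 0 < ℓ) (hℓL : ℓ ≤ L)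
    (hα : α = 1 / L)
    (hβ : β = (Real.sqrt (L / ℓ) - 1) / (Real.sqrt (L / ℓ) + 1))
    (hlam1 : ℓ ≤ lam) (hlam2 : lam ≤ L)
    (T : Matrix (Fin 2) (Fin 2) ℝ)
    (hT : T = !![(1 + β) * (1 - α * lam), -(β * (1 - α * lam)); 1, 0])
    (zp zm : ℂ)
    (hzp : zp = (((1 + β) * (1 - α * lam) : ℝ) : ℂ) / 2 +
      ((Real.sqrt (4 * β * (1 - α * lam) - (1 + β) ^ 2 * (1 - α * lam) ^ 2) : ℝ) : ℂ)
        * Complex.I / 2)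
    (hzm : zm = (((1 + β) * (1 - α * lam) : ℝ) : ℂ) / 2 -
      ((Real.sqrt (4 * β * (1 - α * lam) - (1 + β) ^ 2 * (1 - α * lam) ^ 2) : ℝ) : ℂ)
        * Complex.I / 2) :
    (T.map (Complex.ofReal)).charpoly.IsRoot zp ∧
    (T.map (Complex.ofReal)).charpoly.IsRoot zm ∧
    ‖zp‖ = Real.sqrt (β * (1 - α * lam)) ∧
    ‖zm‖ = Real.sqrt (β * (1 - α * lam)) ∧
    Real.sqrt (β * (1 - α * lam)) ≤ Real.sqrt (β * (1 - α * ℓ)) ∧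
    Real.sqrt (β * (1 - α * ℓ)) = 1 - 1 / Real.sqrt (L / ℓ) := by
  have hL : 0 < L := lt_of_lt_of_le hℓ hℓL
  set s : ℝ := Real.sqrt (L / ℓ) with hs
  have hs1 : 1 ≤ s := by
    rw [hs]
    rw [show (1:ℝ) = Real.sqrt 1 by simp]
    exact Real.sqrt_le_sqrt ((one_le_div hℓ).mpr hℓL)
  have hs0 : 0 < s := lt_of_lt_of_le one_pos hs1
  have hssq : s ^ 2 = L / ℓ := Real.sq_sqrt (by positivity)
  have hLval : L = ℓ * s ^ 2 := by
    rw [hssq]; field_simp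
  have hβ0 : 0 ≤ β := by
    rw [hβ]
    apply div_nonneg <;> linarith
  have hc0 : 0 ≤ 1 - α * lam := by
    rw [hα]
    have : lam / L ≤ 1 := (div_le_one hL).mpr hlam2
    rw [div_mul_eq_mul_div, one_mul]
    linarith
  have hcle : 1 - α * lam ≤ 1 - α * ℓ := by
    have hα0 : 0 ≤ α := by rw [hα]; positivity
    nlinarith
  have hkey : (1 + β) ^ 2 * (1 - α * ℓ) = 4 * β := by
    rw [hβ, hα, hLval]
    have h1 : s + 1 ≠ 0 := by positivity
    have h2 : (ℓ : ℝ) ≠ 0 := ne_of_gt hℓ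
    have h3 : s ≠ 0 := ne_of_gt hs0
    field_simp
    ring
  have hdisc : 0 ≤ 4 * β * (1 - α * lam) - (1 + β) ^ 2 * (1 - α * lam) ^ 2 := by
    have h4 : (1 + β) ^ 2 * (1 - α * lam) ≤ 4 * β := by
      calc (1 + β) ^ 2 * (1 - α * lam) ≤ (1 + β) ^ 2 * (1 - α * ℓ) := by nlinarith [sq_nonneg (1+β)]
        _ = 4 * β := hkey
    nlinarith
  set r : ℝ := Real.sqrt (4 * β * (1 - α * lam) - (1 + β) ^ 2 * (1 - α * lam) ^ 2) with hr
  have hr2 : r ^ 2 = 4 * β * (1 - α * lam) - (1 + β) ^ 2 * (1 - α * lam) ^ 2 :=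
    Real.sq_sqrt hdisc
  set t : ℝ := (1 + β) * (1 - α * lam) with ht
  set d : ℝ := β * (1 - α * lam) with hd
  have hd0 : 0 ≤ d := mul_nonneg hβ0 hc0
  have hr2' : r ^ 2 = 4 * d - t ^ 2 := by rw [hr2, ht, hd]; ring
  have hr2c : (r : ℂ) ^ 2 = 4 * (d : ℂ) - (t : ℂ) ^ 2 := by
    exact_mod_cast congrArg Complex.ofReal hr2'
  -- charpoly
  have hcp : (T.map (Complex.ofReal)).charpoly =
      X ^ 2 - C (t : ℂ) * X + C (d : ℂ) := by
    have e00 : T 0 0 = t := by rw [hT]; simp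
    have e01 : T 0 1 = -d := by rw [hT]; simp
    have e10 : T 1 0 = 1 := by rw [hT]; simp
    have e11 : T 1 1 = 0 := by rw [hT]; simp
    rw [Matrix.charpoly, Matrix.det_fin_two,
      Matrix.charmatrix_apply_eq, Matrix.charmatrix_apply_eq,
      Matrix.charmatrix_apply_ne _ _ _ (by decide), Matrix.charmatrix_apply_ne _ _ _ (by decide),
      Matrix.map_apply, Matrix.map_apply, Matrix.map_apply, Matrix.map_apply,
      e00, e01, e10, e11]
    simp only [Complex.ofReal_neg, map_neg]
    push_cast
    simp only [map_zero, map_one, mul_zero, mul_one, add_zero, zero_mul]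
    ring
  have hroot_p : (T.map (Complex.ofReal)).charpoly.IsRoot zp := by
    rw [hcp, Polynomial.IsRoot.def]
    simp only [eval_add, eval_sub, eval_pow, eval_mul, eval_C, eval_X]
    rw [hzp]
    linear_combination (Complex.I ^ 2 / 4) * hr2c + ((4 * (d:ℂ) - (t:ℂ)^2) / 4) * Complex.I_sq
  have hroot_m : (T.map (Complex.ofReal)).charpoly.IsRoot zm := by
    rw [hcp, Polynomial.IsRoot.def]
    simp only [eval_add, eval_sub, eval_pow, eval_mul, eval_C, eval_X]
    rw [hzm]
    linear_combination (Complex.I ^ 2 / 4) * hr2c + ((4 * (d:ℂ) - (t:ℂ)^2) / 4) * Complex.I_sq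
  have habs : ∀ z : ℂ, z.re = t / 2 → (z.im = r / 2 ∨ z.im = -(r / 2)) →
      ‖z‖ = Real.sqrt d := by
    intro z hre him
    rw [Complex.norm_def, Complex.normSq_apply, hre]
    congr 1
    rcases him with h | h <;> rw [h] <;> linear_combination hr2' / 4
  have habsp : ‖zp‖ = Real.sqrt d := by
    apply habs
    · rw [hzp]
      simp [Complex.add_re, Complex.div_re, Complex.mul_re]
    · left
      rw [hzp]
      simp [Complex.add_im, Complex.div_im, Complex.mul_im]
  have habsm : ‖zm‖ = Real.sqrt d := by
    apply habs
    · rw [hzm]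
      simp [Complex.sub_re, Complex.div_re, Complex.mul_re]
    · right
      rw [hzm]
      simp [Complex.sub_im, Complex.div_im, Complex.mul_im]
  refine ⟨hroot_p, hroot_m, habsp, habsm, ?_, ?_⟩
  · exact Real.sqrt_le_sqrt (mul_le_mul_of_nonneg_left hcle hβ0)
  · have heq : β * (1 - α * ℓ) = (1 - 1 / s) ^ 2 := by
      rw [hβ, hα, hLval]
      have h1 : s + 1 ≠ 0 := by positivity
      have h3 : s ≠ 0 := ne_of_gt hs0
      field_simp
      ring
    rw [heq, Real.sqrt_sq (by
      have : 1 / s ≤ 1 := by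
        rw [div_le_one hs0]; exact hs1
      linarith)]
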